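/- The function g(ℓ) = arccos(tanh(ℓ/2))/ℓ is convex on (0, ∞); equivalently, ℓ ↦ (π/ℓ)·arccos(tanh(ℓ/2)) is convex on (0, ∞). -/

import Mathlib

open Real Set

lemma tanh_lt_one' (x : ℝ) : Real.tanh x < 1 := by
  rw [Real.tanh_eq_sinh_div_cosh, div_lt_one (Real.cosh_pos x)]
  exact Real.sinh_lt_cosh x

lemma neg_one_lt_tanh' (x : ℝ) : -1 < Real.tanh x := by
  have := tanh_lt_one' (-x)
  rw [Real.tanh_neg] at this
  linarith

lemma one_sub_tanh_sq (x : ℝ) : 1 - Real.tanh x ^ 2 = (Real.cosh x ^ 2)⁻¹ := by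
  have hc : Real.cosh x ≠ 0 := (Real.cosh_pos _).ne'
  have h := Real.cosh_sq_sub_sinh_sq x
  rw [Real.tanh_eq_sinh_div_cosh, div_pow]
  field_simp
  exact h

lemma hasDerivAt_tanh' (x : ℝ) :
    HasDerivAt Real.tanh ((Real.cosh x ^ 2)⁻¹) x := by
  have hc : Real.cosh x ≠ 0 := (Real.cosh_pos _).ne'
  have h := (Real.hasDerivAt_sinh x).div (Real.hasDerivAt_cosh x) hc
  have heq : (Real.sinh / Real.cosh) = Real.tanh := by
    funext y; rw [Pi.div_apply, Real.tanh_eq_sinh_div_cosh]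
  rw [heq] at h
  refine h.congr_deriv ?_
  have := Real.cosh_sq_sub_sinh_sq x
  field_simp
  linarith

lemma hasDerivAt_f (x : ℝ) :
    HasDerivAt (fun l : ℝ => Real.arccos (Real.tanh (l / 2)))
      (-(1 / (2 * Real.cosh (x / 2)))) x := by
  have h2 : HasDerivAt (fun l : ℝ => l / 2) (1 / 2) x := by
    simpa using (hasDerivAt_id x).div_const 2
  have ht : HasDerivAt (fun l : ℝ => Real.tanh (l / 2))
      ((Real.cosh (x / 2) ^ 2)⁻¹ * (1 / 2)) x :=
    by have := (hasDerivAt_tanh' (x / 2)).comp x h2; exact this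
  have h1 : Real.tanh (x / 2) ≠ -1 := (neg_one_lt_tanh' _).ne'
  have h1' : Real.tanh (x / 2) ≠ 1 := (tanh_lt_one' _).ne
  have ha := (Real.hasDerivAt_arccos h1 h1').comp x ht
  refine ha.congr_deriv ?_
  have hc : (0 : ℝ) < Real.cosh (x / 2) := Real.cosh_pos _
  rw [one_sub_tanh_sq, Real.sqrt_inv, Real.sqrt_sq hc.le]
  field_simp

lemma deriv_f (x : ℝ) :
    deriv (fun l : ℝ => Real.arccos (Real.tanh (l / 2))) x
      = -(1 / (2 * Real.cosh (x / 2))) :=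
  (hasDerivAt_f x).deriv

lemma f_convex : ConvexOn ℝ (Set.Ioi (0:ℝ))
    (fun l : ℝ => Real.arccos (Real.tanh (l / 2))) := by
  refine MonotoneOn.convexOn_of_deriv (convex_Ioi 0)
    (fun x _ => (hasDerivAt_f x).continuousAt.continuousWithinAt)
    (fun x _ => (hasDerivAt_f x).differentiableAt.differentiableWithinAt) ?_
  rw [interior_Ioi]
  intro x hx y hy hxy
  rw [deriv_f, deriv_f]
  have hcx : (0:ℝ) < Real.cosh (x / 2) := Real.cosh_pos _
  have hcy : (0:ℝ) < Real.cosh (y / 2) := Real.cosh_pos _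
  have : Real.cosh (x / 2) ≤ Real.cosh (y / 2) := by
    rw [Real.cosh_le_cosh]
    rw [mem_Ioi] at hx hy
    rw [abs_of_pos (by linarith), abs_of_pos (by linarith)]
    linarith
  have h1 : 1 / (2 * Real.cosh (y / 2)) ≤ 1 / (2 * Real.cosh (x / 2)) := by
    apply one_div_le_one_div_of_le <;> linarith
  linarith

lemma f_anti : AntitoneOn (fun l : ℝ => Real.arccos (Real.tanh (l / 2)))
    (Set.Ioi (0:ℝ)) := by
  refine antitoneOn_of_deriv_nonpos (convex_Ioi 0)
    (fun x _ => (hasDerivAt_f x).continuousAt.continuousWithinAt)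
    (fun x _ => by
      rw [interior_Ioi] at *
      exact (hasDerivAt_f x).differentiableAt.differentiableWithinAt) ?_
  intro x _
  rw [deriv_f]
  have : (0:ℝ) < Real.cosh (x / 2) := Real.cosh_pos _
  have : (0:ℝ) < 1 / (2 * Real.cosh (x / 2)) := by positivity
  linarith

lemma inv_convex : ConvexOn ℝ (Set.Ioi (0:ℝ)) (fun l : ℝ => l⁻¹) := by
  have := (strictConvexOn_zpow (m := -1) (by decide) (by decide)).convexOn
  convert this using 2 with x
  · rfl
  · rfl
  simp [zpow_neg_one]

lemma main_convex : ConvexOn ℝ (Set.Ioi (0:ℝ))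
    (fun l : ℝ => Real.arccos (Real.tanh (l / 2)) / l) := by
  have h := ConvexOn.mul (𝕜 := ℝ) (s := Set.Ioi (0:ℝ))
    (f := fun l : ℝ => Real.arccos (Real.tanh (l / 2)))
    (g := fun l : ℝ => l⁻¹)
    f_convex inv_convex
    (fun x _ => Real.arccos_nonneg _)
    (fun x hx => inv_nonneg.2 (le_of_lt hx))
    ?_
  · have heq : (fun l : ℝ => Real.arccos (Real.tanh (l / 2)) / l)
        = (fun l : ℝ => Real.arccos (Real.tanh (l / 2))) * fun l : ℝ => l⁻¹ := by
      funext x; simp [div_eq_mul_inv]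
    rw [heq]; exact h
  · intro i hi j hj hg
    rw [mem_Ioi] at hi hj
    have hji : j < i := by
      by_contra hc
      push_neg at hc
      exact absurd hg (not_lt.2 (inv_anti₀ hi hc))
    exact f_anti hj hi hji.le

/-- `g(ℓ) = arccos(tanh(ℓ/2))/ℓ` is convex on `(0,∞)`; equivalently
`ℓ ↦ (π/ℓ)·arccos(tanh(ℓ/2))` is convex on `(0,∞)`. -/
theorem stmt_12 :
    ConvexOn ℝ (Set.Ioi 0) (fun l : ℝ => Real.arccos (Real.tanh (l / 2)) / l) ∧
    ConvexOn ℝ (Set.Ioi 0)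
      (fun l : ℝ => (Real.pi / l) * Real.arccos (Real.tanh (l / 2))) := by
  refine ⟨main_convex, ?_⟩
  have h := main_convex.smul (c := Real.pi) Real.pi_pos.le
  convert h using 2 with x
  · rfl
  · rfl
  simp only [smul_eq_mul]
  field_simp
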